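/- For all integers n₁ > 1 and m₁ ≥ 1 there exists a point x ∈ K with strict itinerary n₁m₁ under R_{b₁}; that is, ‖x − 1‖ < 1/√2, R_{b₁}(x) ∈ Γ_{n₁}, R_{b₁}^{∘(n₁+1)}(x) ∈ Ψ_{m₁}, and R_{b₁}^{∘I₁}(x) = 1, where I₁ = n₁ + 3(m₁ − 1) + 2. -/

import Mathlib

/-- The sequence `ρ_i = 2^(1/2^i − 3/2)`. -/
noncomputable def rhoSeq (i : ℕ) : ℝ := (2 : ℝ) ^ ((1 : ℝ) / 2 ^ i - 3 / 2)

open IsUltrametricDist Polynomial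

section Helpers

variable {K : Type*} [NormedField K] [IsUltrametricDist K]
set_option linter.unusedSectionVars false

lemma ult' (x y : K) : ‖x + y‖ ≤ max ‖x‖ ‖y‖ := norm_add_le_max x y

lemma iso' {x y : K} (h : ‖y‖ < ‖x‖) : ‖x + y‖ = ‖x‖ := by
  refine le_antisymm ((ult' x y).trans (by simp [h.le])) ?_
  by_contra hlt
  push_neg at hlt
  have : ‖x‖ ≤ max ‖x + y‖ ‖y‖ := by simpa using ult' (x + y) (-y)
  rcases max_cases ‖x + y‖ ‖y‖ with ⟨h1, _⟩ | ⟨h1, _⟩ <;> rw [h1] at this <;> linarith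

lemma iso_addv {x y : K} {u v : ℝ} (hx : ‖x‖ = u) (hy : ‖y‖ ≤ v) (h : v < u) :
    ‖x + y‖ = u := by
  subst hx; exact iso' (lt_of_le_of_lt hy h)

lemma iso_subv {x y : K} {u v : ℝ} (hx : ‖x‖ = u) (hy : ‖y‖ ≤ v) (h : v < u) :
    ‖x - y‖ = u := by
  rw [sub_eq_add_neg]; exact iso_addv hx (by simpa using hy) h

lemma iso_subv' {x y : K} {u v : ℝ} (hx : ‖x‖ = u) (hy : ‖y‖ ≤ v) (h : v < u) :
    ‖y - x‖ = u := by
  rw [norm_sub_rev]; exact iso_subv hx hy h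

lemma ult_le {x y : K} {c : ℝ} (hx : ‖x‖ ≤ c) (hy : ‖y‖ ≤ c) : ‖x + y‖ ≤ c :=
  (ult' x y).trans (max_le hx hy)

lemma ult_sub_le {x y : K} {c : ℝ} (hx : ‖x‖ ≤ c) (hy : ‖y‖ ≤ c) : ‖x - y‖ ≤ c := by
  rw [sub_eq_add_neg]; exact ult_le hx (by simpa using hy)

lemma ult_sub (x y : K) : ‖x - y‖ ≤ max ‖x‖ ‖y‖ := by
  rw [sub_eq_add_neg]; simpa using ult' x (-y)

lemma ult3 {x y z : K} {c : ℝ} (hx : ‖x‖ ≤ c) (hy : ‖y‖ ≤ c) (hz : ‖z‖ ≤ c) :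
    ‖x + y + z‖ ≤ c := ult_le (ult_le hx hy) hz

lemma newton_eq {u₁ u₂ : K} (h : ‖u₁ + u₂‖ ^ 2 < ‖u₁ * u₂‖) : ‖u₁‖ = ‖u₂‖ := by
  by_contra hne
  rcases lt_or_gt_of_ne hne with hlt | hlt
  · have h1 : ‖u₁ + u₂‖ = ‖u₂‖ := by rw [add_comm]; exact iso' hlt
    rw [h1, norm_mul] at h
    nlinarith [norm_nonneg u₁, norm_nonneg u₂]
  · have h1 : ‖u₁ + u₂‖ = ‖u₁‖ := iso' hlt
    rw [h1, norm_mul] at h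
    nlinarith [norm_nonneg u₁, norm_nonneg u₂]

lemma newton_split {u₁ u₂ : K} (h : ‖u₁ * u₂‖ < ‖u₁ + u₂‖ ^ 2) :
    ∃ s t : K, ((s = u₁ ∧ t = u₂) ∨ (s = u₂ ∧ t = u₁)) ∧
      ‖s‖ * ‖u₁ + u₂‖ = ‖u₁ * u₂‖ ∧ ‖t‖ = ‖u₁ + u₂‖ := by
  have hne : ‖u₁‖ ≠ ‖u₂‖ := by
    intro he
    have : ‖u₁ + u₂‖ ≤ ‖u₂‖ := (ult' u₁ u₂).trans (by rw [he, max_self])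
    rw [norm_mul, he] at h
    nlinarith [norm_nonneg u₂, norm_nonneg (u₁ + u₂)]
  rcases lt_or_gt_of_ne hne with hlt | hlt
  · refine ⟨u₁, u₂, Or.inl ⟨rfl, rfl⟩, ?_, ?_⟩
    · rw [show ‖u₁ + u₂‖ = ‖u₂‖ from by rw [add_comm]; exact iso' hlt, norm_mul]
    · rw [show ‖u₁ + u₂‖ = ‖u₂‖ from by rw [add_comm]; exact iso' hlt]
  · refine ⟨u₂, u₁, Or.inr ⟨rfl, rfl⟩, ?_, (iso' hlt).symm⟩
    rw [iso' hlt, norm_mul, mul_comm]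

lemma rdiff {a b₁ : K} (R : K → K → K)
    (hRdef : ∀ β z, R β z = (z ^ 2 - z) / (β * z - 1 / a))
    {z w : K} (hz : b₁ * z - 1 / a ≠ 0) (hw : b₁ * w - 1 / a ≠ 0) :
    R b₁ z - R b₁ w =
      ((z - w) * (b₁ * w ^ 2 - (2 / a) * w + 1 / a) + (z - w) ^ 2 * (b₁ * w - 1 / a)) /
        ((b₁ * z - 1 / a) * (b₁ * w - 1 / a)) := by
  rw [hRdef b₁ z, hRdef b₁ w]
  rw [div_sub_div _ _ hz hw]; congr 1
  ring

end Helpers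

section Quad

variable {K : Type*} [NormedField K] [IsAlgClosed K] [IsUltrametricDist K]
set_option linter.unusedSectionVars false

lemma quad_roots' (p q : K) :
    ∃ r₁ r₂ : K, r₁ + r₂ = -p ∧ r₁ * r₂ = q ∧
      r₁ ^ 2 + p * r₁ + q = 0 ∧ r₂ ^ 2 + p * r₂ + q = 0 := by
  obtain ⟨r, hr⟩ := IsAlgClosed.exists_root (C (1:K) * X ^ 2 + C p * X + C q)
    (by rw [Polynomial.degree_quadratic one_ne_zero]; norm_num)
  have hroot : r ^ 2 + p * r + q = 0 := by
    have := hr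
    simp [Polynomial.IsRoot, Polynomial.eval_add, Polynomial.eval_mul] at this
    linear_combination this
  exact ⟨r, -p - r, by ring, by linear_combination -hroot, hroot, by linear_combination hroot⟩

/-- Solving `R b₁ z = w` by a quadratic, with roots expressed as offsets from a center `γ`. -/
lemma pre {a b₁ : K} (ha : ‖a‖ = 2) (hb₁ : ‖b₁‖ = 1)
    (R : K → K → K) (hRdef : ∀ β z, R β z = (z ^ 2 - z) / (β * z - 1 / a))
    (w γ : K) (hw : w ≠ 0) :
    ∃ u₁ u₂ : K, R b₁ (γ + u₁) = w ∧ R b₁ (γ + u₂) = w ∧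
      u₁ + u₂ = (1 + w * b₁) - 2 * γ ∧
      u₁ * u₂ = γ ^ 2 - (1 + w * b₁) * γ + w / a := by
  have ha0 : a ≠ 0 := by intro h; rw [h, norm_zero] at ha; norm_num at ha
  obtain ⟨r₁, r₂, hsum, hprod, h1, h2⟩ := quad_roots' (-(1 + w * b₁)) (w / a)
  have key : ∀ r : K, r ^ 2 + -(1 + w * b₁) * r + w / a = 0 → R b₁ r = w := by
    intro r hr
    have hr0 : r ≠ 0 := by
      intro h; rw [h] at hr
      simp at hr
      rcases hr with h | h
      · exact hw h
      · exact ha0 (by simpa using h)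
    have hr1 : r ≠ 1 := by
      intro h; rw [h] at hr
      have hba : (1:K) / a - b₁ ≠ 0 := by
        intro h'
        have : ‖(1:K) / a‖ = ‖b₁‖ := by rw [sub_eq_zero.mp h']
        rw [norm_div, norm_one, ha, hb₁] at this
        norm_num at this
      have : w * (1 / a - b₁) = 0 := by linear_combination hr
      rcases mul_eq_zero.1 this with h' | h'
      · exact hw h'
      · exact hba h'
    have hD : b₁ * r - 1 / a ≠ 0 := by
      intro h
      have h3 : r * (r - 1) = 0 := by linear_combination hr + w * h
      rcases mul_eq_zero.1 h3 with h' | h'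
      · exact hr0 h'
      · exact hr1 (by linear_combination h')
    rw [hRdef b₁ r, div_eq_iff hD]
    linear_combination hr
  refine ⟨r₁ - γ, r₂ - γ, ?_, ?_, by linear_combination hsum, ?_⟩
  · rw [add_sub_cancel]; exact key r₁ h1
  · rw [add_sub_cancel]; exact key r₂ h2
  · linear_combination hprod - γ * hsum

end Quad

noncomputable def ee (x : ℝ) : ℝ := (2 : ℝ) ^ x

lemma ee_pos (x : ℝ) : 0 < ee x := Real.rpow_pos_of_pos (by norm_num) x

lemma ee_ne (x : ℝ) : ee x ≠ 0 := (ee_pos x).ne'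

lemma ee_add (x y : ℝ) : ee (x + y) = ee x * ee y := Real.rpow_add (by norm_num) x y

lemma ee_lt_iff {x y : ℝ} : ee x < ee y ↔ x < y := Real.rpow_lt_rpow_left_iff (by norm_num)

lemma ee_le_iff {x y : ℝ} : ee x ≤ ee y ↔ x ≤ y := Real.rpow_le_rpow_left_iff (by norm_num)

lemma ee_zero : ee 0 = 1 := Real.rpow_zero 2

lemma ee_neg_one : ee (-1) = 1 / 2 := by
  rw [ee, Real.rpow_neg_one]; norm_num

lemma ee_neg_two : ee (-2) = 1 / 4 := by
  have : ee (-2) = ee (-1) * ee (-1) := by rw [← ee_add]; norm_num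
  rw [this, ee_neg_one]; norm_num

lemma ee_one' : ee 1 = 2 := Real.rpow_one 2

lemma ee_div (x y : ℝ) : ee x / ee y = ee (x - y) := by
  rw [ee, ee, ee, ← Real.rpow_sub (by norm_num)]

lemma ee_sq (x : ℝ) : ee x ^ 2 = ee (2 * x) := by
  rw [two_mul, ee_add, sq]

lemma eq_one_of_sq_facts {t : ℝ} (h0 : 0 ≤ t) (hA : t ^ 2 ≤ max t 1) (hB : 1 ≤ max (t ^ 2) t) :
    t = 1 := by
  rcases le_max_iff.mp hA with h' | h' <;> rcases le_max_iff.mp hB with h'' | h'' <;>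
    nlinarith

lemma eq_one_of_sq {t : ℝ} (h0 : 0 ≤ t) (h : t ^ 2 = 1) : t = 1 := by nlinarith

lemma eq_ee_of_sq {t x : ℝ} (ht : 0 ≤ t) (h : t ^ 2 = ee (2 * x)) : t = ee x := by
  have h2 : (t - ee x) * (t + ee x) = 0 := by nlinarith [ee_sq x]
  rcases mul_eq_zero.1 h2 with h3 | h3
  · linarith
  · nlinarith [ee_pos x]

lemma ee_half : ee (1/2) = Real.sqrt 2 := by
  rw [Real.sqrt_eq_rpow]; rfl

lemma ee_neg_half : ee (-(1/2)) = 1 / Real.sqrt 2 := by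
  rw [← ee_half, ee, ee, Real.rpow_neg (by norm_num : (0:ℝ) ≤ 2)]
  rw [inv_eq_one_div]

lemma ee_nat (n : ℕ) : ee n = (2:ℝ) ^ n := by
  rw [ee, Real.rpow_natCast]

lemma ee_lt_one {x : ℝ} (h : x < 0) : ee x < 1 := by
  rw [← ee_zero]; exact ee_lt_iff.2 h

lemma ee_mul (x y : ℝ) : ee x * ee y = ee (x + y) := (ee_add x y).symm

set_option maxHeartbeats 2000000 in
/-- For all integers `n₁ > 1` and `m₁ ≥ 1` there is a point `x` with
strict itinerary `n₁m₁` under `R_{b₁}`: `‖x − 1‖ < 1/√2`, `R_{b₁}(x) ∈ Γ_{n₁}`,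
`R_{b₁}^{∘(n₁+1)}(x) ∈ Ψ_{m₁}`, and `R_{b₁}^{∘(n₁+3(m₁−1)+2)}(x) = 1`. -/
theorem exists_point_with_strict_itinerary
    {K : Type*} [NormedField K] [CompleteSpace K] [IsAlgClosed K] [IsUltrametricDist K]
    (h2 : ‖(2 : K)‖ = 1 / 2)
    (a b₁ c₁ : K) (ha : ‖a‖ = 2) (hb₁ : ‖b₁‖ = 1)
    (R : K → K → K) (hRdef : ∀ β z, R β z = (z ^ 2 - z) / (β * z - 1 / a))
    (hc₁ : b₁ * c₁ ^ 2 - (2 / a) * c₁ + 1 / a = 0)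
    (hper : (R b₁)^[3] '' Metric.closedBall c₁ (1 / (2 * Real.sqrt 2)) =
      Metric.closedBall c₁ (1 / (2 * Real.sqrt 2)))
    (n₁ m₁ : ℕ) (hn₁ : 1 < n₁) (hm₁ : 1 ≤ m₁) :
    ∃ x : K, ‖x - 1‖ < 1 / Real.sqrt 2 ∧
      ‖R b₁ x‖ = ((2 : ℝ) ^ n₁)⁻¹ / Real.sqrt 2 ∧
      ‖(R b₁)^[n₁ + 1] x - c₁‖ = rhoSeq m₁ ∧
      (R b₁)^[n₁ + 3 * (m₁ - 1) + 2] x = 1 := by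
  have ha0 : a ≠ 0 := by intro h; rw [h, norm_zero] at ha; norm_num at ha
  have hb0 : b₁ ≠ 0 := by intro h; rw [h, norm_zero] at hb₁; norm_num at hb₁
  have hna : ‖(1:K)/a‖ = ee (-1) := by rw [norm_div, norm_one, ha, ee_neg_one]
  have h2a : ‖(2:K)/a‖ = ee (-2) := by rw [norm_div, h2, ha, ee_neg_two]; norm_num
  have h2K : ‖(2:K)‖ = ee (-1) := by rw [h2, ee_neg_one]
  have hbmul : ∀ z : K, ‖b₁ * z‖ = ‖z‖ := fun z => by rw [norm_mul, hb₁, one_mul]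
  have hmulb : ∀ z : K, ‖z * b₁‖ = ‖z‖ := fun z => by rw [norm_mul, hb₁, mul_one]
  -- ‖c₁‖ = 2^{-1/2}
  have hc : ‖c₁‖ = ee (-(1/2)) := by
    have key : b₁ * c₁ ^ 2 = (2/a) * c₁ - 1/a := by linear_combination hc₁
    have hX : ‖b₁ * c₁ ^ 2‖ = ‖c₁‖ ^ 2 := by rw [hbmul, norm_pow]
    have A1 : ‖c₁‖ ^ 2 ≤ max (ee (-2) * ‖c₁‖) (ee (-1)) := by
      rw [← hX, key]
      calc ‖(2:K)/a * c₁ - 1/a‖ ≤ max ‖(2:K)/a * c₁‖ ‖(1:K)/a‖ := ult_sub _ _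
        _ = max (ee (-2) * ‖c₁‖) (ee (-1)) := by rw [norm_mul, h2a, hna]
    have A2 : ee (-1) ≤ max (ee (-2) * ‖c₁‖) (‖c₁‖ ^ 2) := by
      have hid : (1:K)/a = (2/a) * c₁ - b₁ * c₁ ^ 2 := by linear_combination key
      calc ee (-1) = ‖(1:K)/a‖ := hna.symm
        _ = ‖(2/a) * c₁ - b₁ * c₁ ^ 2‖ := by rw [← hid]
        _ ≤ max ‖(2:K)/a * c₁‖ ‖b₁ * c₁ ^ 2‖ := ult_sub _ _
        _ = max (ee (-2) * ‖c₁‖) (‖c₁‖ ^ 2) := by rw [norm_mul, h2a, hX]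
    have e1 : ee (-1) = 1/2 := ee_neg_one
    have e2 : ee (-2) = 1/4 := ee_neg_two
    rw [e1, e2] at A1 A2
    have hnn := norm_nonneg c₁
    have hsq : ‖c₁‖ ^ 2 = ee (2 * (-(1/2))) := by
      have : (2 : ℝ) * (-(1/2)) = -1 := by norm_num
      rw [this, e1]
      have hle : ‖c₁‖ ^ 2 ≤ 1/2 := by
        rcases le_max_iff.mp A1 with h1 | h1
        · rcases le_max_iff.mp A2 with h2' | h2' <;> nlinarith
        · exact h1
      have hge : (1:ℝ)/2 ≤ ‖c₁‖ ^ 2 := by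
        rcases le_max_iff.mp A2 with h2' | h2'
        · nlinarith
        · exact h2'
      linarith
    exact eq_ee_of_sq hnn hsq
  -- some ee comparisons used repeatedly
  have l0 : ee (-1) < ee (-(1/2)) := ee_lt_iff.2 (by norm_num)
  have l1 : ee (-(1/2)) < 1 := ee_lt_one (by norm_num)
  -- the denominator at c₁
  have hDc : ‖b₁ * c₁ - 1/a‖ = ee (-(1/2)) := by
    refine iso_subv (by rw [hbmul, hc]) hna.le l0
  have hDc0 : b₁ * c₁ - 1/a ≠ 0 := by
    intro h; rw [h, norm_zero] at hDc; exact ee_ne _ hDc.symm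
  -- z₁ = R c₁
  set z₁ : K := R b₁ c₁ with hz₁def
  have hz1 : z₁ * (b₁ * c₁ - 1/a) = c₁ ^ 2 - c₁ := by
    rw [hz₁def, hRdef, div_mul_cancel₀ _ hDc0]
  have hc1one : ‖c₁ - 1‖ = 1 := by
    refine iso_subv' (u := (1:ℝ)) norm_one hc.le l1
  have hz1n : ‖z₁‖ = 1 := by
    have h' : ‖z₁‖ * ee (-(1/2)) = ee (-(1/2)) * 1 := by
      have := congrArg norm hz1
      rw [norm_mul, hDc] at this
      rw [this, show c₁ ^ 2 - c₁ = c₁ * (c₁ - 1) from by ring, norm_mul, hc, hc1one]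
    exact mul_right_cancel₀ (ee_ne (-(1/2))) (h'.trans (by ring))
  -- ‖1 + z₁ b₁‖ = 2^{-3/2}
  have honezb : ‖1 + z₁ * b₁‖ = ee (-(3/2)) := by
    have hid : (1 + z₁ * b₁) * (b₁ * c₁ - 1/a) = (2/a) * (c₁ - 1) := by
      linear_combination b₁ * hz1 + hc₁
    have h' := congrArg norm hid
    rw [norm_mul, hDc, norm_mul, h2a, hc1one, mul_one] at h'
    have : ee (-(3/2)) * ee (-(1/2)) = ee (-2) := by rw [ee_mul]; norm_num
    exact mul_right_cancel₀ (ee_ne (-(1/2))) (h'.trans this.symm)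
  -- z₂, z₃
  set z₂ : K := R b₁ z₁ with hz₂def
  set z₃ : K := R b₁ z₂ with hz₃def
  have hDz1 : ‖b₁ * z₁ - 1/a‖ = 1 := by
    refine iso_subv (u := (1:ℝ)) (by rw [hbmul, hz1n]) hna.le (ee_lt_one (by norm_num))
  have hDz10 : b₁ * z₁ - 1/a ≠ 0 := by
    intro h; rw [h, norm_zero] at hDz1; norm_num at hDz1
  have hz2 : z₂ * (b₁ * z₁ - 1/a) = z₁ ^ 2 - z₁ := by
    rw [hz₂def, hRdef, div_mul_cancel₀ _ hDz10]
  -- hper: membership of R³(c₁)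
  have hball : 1 / (2 * Real.sqrt 2) = ee (-(3/2)) := by
    rw [show (-(3/2) : ℝ) = (-1) + (-(1/2)) by norm_num, ee_add, ee_neg_one, ee_neg_half]
    ring
  have hrnonneg : (0:ℝ) ≤ 1 / (2 * Real.sqrt 2) := by positivity
  have hiter3 : ∀ z : K, (R b₁)^[3] z = R b₁ (R b₁ (R b₁ z)) := by
    intro z
    rw [show (3:ℕ) = 1 + 1 + 1 from rfl]
    simp [Function.iterate_add_apply]
  have hz3mem : ‖z₃ - c₁‖ ≤ ee (-(3/2)) := by
    have hmem : c₁ ∈ Metric.closedBall c₁ (1 / (2 * Real.sqrt 2)) :=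
      Metric.mem_closedBall_self hrnonneg
    have himg := Set.mem_image_of_mem ((R b₁)^[3]) hmem
    rw [hper] at himg
    have := Metric.mem_closedBall.mp himg
    rw [Metric.mem_closedBall] at himg
    rw [dist_eq_norm, hiter3, ← hz₁def, ← hz₂def, ← hz₃def, hball] at himg
    exact himg
  have l32 : ee (-(3/2)) < ee (-(1/2)) := ee_lt_iff.2 (by norm_num)
  have hz3n : ‖z₃‖ = ee (-(1/2)) := by
    have := iso_addv hc hz3mem l32
    simpa using this
  have hz30 : z₃ ≠ 0 := by
    intro h; rw [h, norm_zero] at hz3n; exact ee_ne _ hz3n.symm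
  have hDz20 : b₁ * z₂ - 1/a ≠ 0 := by
    intro h
    exact hz30 (by rw [hz₃def, hRdef, h, div_zero])
  have hz3e : z₃ * (b₁ * z₂ - 1/a) = z₂ ^ 2 - z₂ := by
    rw [hz₃def, hRdef, div_mul_cancel₀ _ hDz20]
  have hz20 : z₂ ≠ 0 := by
    intro h
    apply hz30
    rw [hz₃def, hRdef, h]
    norm_num
  have hz21 : z₂ ≠ 1 := by
    intro h
    apply hz30
    rw [hz₃def, hRdef, h]
    norm_num
  have hz2nσ : ‖z₂‖ = ‖z₁ - 1‖ := by
    have h' := congrArg norm hz2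
    rw [norm_mul, hDz1, mul_one, show z₁ ^ 2 - z₁ = z₁ * (z₁ - 1) from by ring,
      norm_mul, hz1n, one_mul] at h'
    exact h'
  -- G1 : ‖z₁ - 1‖ = 2^{-3/2}, using hper
  have l52 : ee (-(5/2)) < 1 := ee_lt_one (by norm_num)
  have hσ : ‖z₁ - 1‖ = ee (-(3/2)) := by
    have hσle : ‖z₁ - 1‖ ≤ 1 := by
      calc ‖z₁ - 1‖ ≤ max ‖z₁‖ ‖(1:K)‖ := ult_sub _ _
        _ = 1 := by rw [hz1n, norm_one, max_self]
    rcases lt_or_eq_of_le hσle with hσ1 | hσ1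
    · -- case σ < 1
      have hz2lt : ‖z₂‖ < 1 := by rw [hz2nσ]; exact hσ1
      have hz2one : ‖z₂ - 1‖ = 1 := iso_subv' (u := (1:ℝ)) norm_one le_rfl hz2lt
      have hkey : ee (-(1/2)) * ‖b₁ * z₂ - 1/a‖ = ‖z₂‖ := by
        have h' := congrArg norm hz3e
        rw [norm_mul, hz3n, show z₂ ^ 2 - z₂ = z₂ * (z₂ - 1) from by ring, norm_mul,
          hz2one, mul_one] at h'
        exact h'
      have hD2le : ‖b₁ * z₂ - 1/a‖ ≤ max ‖z₂‖ (ee (-1)) := by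
        calc ‖b₁ * z₂ - 1/a‖ ≤ max ‖b₁ * z₂‖ ‖(1:K)/a‖ := ult_sub _ _
          _ = max ‖z₂‖ (ee (-1)) := by rw [hbmul, hna]
      have hale : ee (-1) ≤ max ‖z₂‖ ‖b₁ * z₂ - 1/a‖ := by
        have hid : (1:K)/a = b₁ * z₂ - (b₁ * z₂ - 1/a) := by ring
        calc ee (-1) = ‖(1:K)/a‖ := hna.symm
          _ = ‖b₁ * z₂ - (b₁ * z₂ - 1/a)‖ := by rw [← hid]
          _ ≤ max ‖b₁ * z₂‖ ‖b₁ * z₂ - 1/a‖ := ult_sub _ _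
          _ = max ‖z₂‖ ‖b₁ * z₂ - 1/a‖ := by rw [hbmul]
      have hz2pos : 0 < ‖z₂‖ := norm_pos_iff.2 hz20
      rw [show ‖z₁ - 1‖ = ‖z₂‖ from hz2nσ.symm]
      have hD0 : (0:ℝ) ≤ ‖b₁ * z₂ - 1/a‖ := norm_nonneg _
      rcases le_max_iff.mp hD2le with h1 | h1
      · exfalso
        have hDpos : 0 < ‖b₁ * z₂ - 1/a‖ := by
          rcases hD0.lt_or_eq with h | h
          · exact h
          · exfalso; rw [← h, mul_zero] at hkey; exact hz2pos.ne hkey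
        have := mul_lt_mul_of_pos_right l1 hDpos
        linarith
      · rcases le_max_iff.mp hale with h2' | h2'
        · exfalso
          have h3 : ee (-(1/2)) * ‖b₁ * z₂ - 1/a‖ ≤ ee (-(1/2)) * ee (-1) :=
            mul_le_mul_of_nonneg_left h1 (ee_pos _).le
          have h4 : ee (-(1/2)) * ee (-1) = ee (-(3/2)) := by rw [ee_mul]; norm_num
          have h5 : ee (-(3/2)) < ee (-1) := ee_lt_iff.2 (by norm_num)
          linarith
        · have hD : ‖b₁ * z₂ - 1/a‖ = ee (-1) := le_antisymm h1 h2'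
          rw [← hkey, hD, ee_mul]
          norm_num
    · -- case σ = 1 : contradiction with hper
      exfalso
      have hz2n1 : ‖z₂‖ = 1 := by rw [hz2nσ, ← hσ1]
      have hD2n : ‖b₁ * z₂ - 1/a‖ ≤ 1 := by
        calc ‖b₁ * z₂ - 1/a‖ ≤ max ‖b₁ * z₂‖ ‖(1:K)/a‖ := ult_sub _ _
          _ ≤ 1 := max_le (by rw [hbmul, hz2n1]) (by rw [hna, ee_neg_one]; norm_num)
      have hD2g : (1:ℝ) ≤ ‖b₁ * z₂ - 1/a‖ := by
        by_contra hlt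
        push_neg at hlt
        have hmax : (1:ℝ) ≤ max ‖b₁ * z₂ - 1/a‖ ‖(1:K)/a‖ := by
          have hid : b₁ * z₂ = (b₁ * z₂ - 1/a) + 1/a := by ring
          calc (1:ℝ) = ‖b₁ * z₂‖ := by rw [hbmul, hz2n1]
            _ = ‖(b₁ * z₂ - 1/a) + 1/a‖ := by rw [← hid]
            _ ≤ _ := ult' _ _
        rcases max_cases ‖b₁ * z₂ - 1/a‖ ‖(1:K)/a‖ with ⟨hh, _⟩ | ⟨hh, _⟩ <;>
          rw [hh] at hmax
        · linarith
        · rw [hna, ee_neg_one] at hmax; linarith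
      have hD2 : ‖b₁ * z₂ - 1/a‖ = 1 := le_antisymm hD2n hD2g
      have hQz1 : ‖b₁ * z₁ ^ 2 - (2/a) * z₁ + 1/a‖ ≤ 1 := by
        rw [show b₁ * z₁ ^ 2 - (2/a) * z₁ + 1/a
            = b₁ * z₁ ^ 2 + (-((2/a) * z₁)) + 1/a from by ring]
        refine ult3 ?_ ?_ ?_
        · rw [hbmul, norm_pow, hz1n]; norm_num
        · rw [norm_neg, norm_mul, h2a, hz1n, mul_one, ee_neg_two]; norm_num
        · rw [hna, ee_neg_one]; norm_num
      have hQz2 : ‖b₁ * z₂ ^ 2 - (2/a) * z₂ + 1/a‖ ≤ 1 := by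
        rw [show b₁ * z₂ ^ 2 - (2/a) * z₂ + 1/a
            = b₁ * z₂ ^ 2 + (-((2/a) * z₂)) + 1/a from by ring]
        refine ult3 ?_ ?_ ?_
        · rw [hbmul, norm_pow, hz2n1]; norm_num
        · rw [norm_neg, norm_mul, h2a, hz2n1, mul_one, ee_neg_two]; norm_num
        · rw [hna, ee_neg_one]; norm_num
      have hstep : ∀ w u : K, ‖b₁ * w - 1/a‖ = 1 →
          ‖b₁ * w ^ 2 - (2/a) * w + 1/a‖ ≤ 1 → ‖u - w‖ ≤ ee (-(5/2)) →
          ‖R b₁ u - R b₁ w‖ ≤ ee (-(5/2)) := by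
        intro w u hDw hQw huw
        have hDw0 : b₁ * w - 1/a ≠ 0 := by
          intro h; rw [h, norm_zero] at hDw; norm_num at hDw
        have hDu : ‖b₁ * u - 1/a‖ = 1 := by
          rw [show b₁ * u - 1/a = (b₁ * w - 1/a) + b₁ * (u - w) from by ring]
          exact iso_addv hDw (by rw [hbmul]; exact huw) l52
        have hDu0 : b₁ * u - 1/a ≠ 0 := by
          intro h; rw [h, norm_zero] at hDu; norm_num at hDu
        have hd := rdiff R hRdef hDu0 hDw0
        rw [hd, norm_div, norm_mul, hDu, hDw, one_mul, div_one]
        refine ult_le ?_ ?_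
        · rw [norm_mul]
          calc ‖u - w‖ * ‖b₁ * w ^ 2 - 2 / a * w + 1 / a‖ ≤ ee (-(5/2)) * 1 :=
              mul_le_mul huw hQw (norm_nonneg _) (ee_pos _).le
            _ = ee (-(5/2)) := mul_one _
        · rw [norm_mul, norm_pow, hDw, mul_one]
          calc ‖u - w‖ ^ 2 ≤ ee (-(5/2)) ^ 2 := pow_le_pow_left₀ (norm_nonneg _) huw 2
            _ = ee (-5) := by rw [ee_sq]; norm_num
            _ ≤ ee (-(5/2)) := ee_le_iff.2 (by norm_num)
      have BND : ∀ z : K, ‖z - c₁‖ ≤ ee (-(3/2)) → ‖(R b₁)^[3] z - z₃‖ ≤ ee (-(5/2)) := by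
        intro z hz
        have hDz : ‖b₁ * z - 1/a‖ = ee (-(1/2)) := by
          rw [show b₁ * z - 1/a = (b₁ * c₁ - 1/a) + b₁ * (z - c₁) from by ring]
          exact iso_addv hDc (by rw [hbmul]; exact hz) l32
        have hDz0 : b₁ * z - 1/a ≠ 0 := by
          intro h; rw [h, norm_zero] at hDz; exact ee_ne _ hDz.symm
        have hstep1 : ‖R b₁ z - z₁‖ ≤ ee (-(5/2)) := by
          have hd := rdiff R hRdef hDz0 hDc0
          rw [hc₁, mul_zero, zero_add] at hd
          rw [← hz₁def] at hd
          rw [hd, norm_div, norm_mul, norm_mul, norm_pow, hDz, hDc]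
          rw [div_le_iff₀ (mul_pos (ee_pos (-(1/2))) (ee_pos (-(1/2))))]
          calc ‖z - c₁‖ ^ 2 * ee (-(1/2)) ≤ ee (-(3/2)) ^ 2 * ee (-(1/2)) :=
              mul_le_mul_of_nonneg_right
                (pow_le_pow_left₀ (norm_nonneg _) hz 2) (ee_pos _).le
            _ = ee (-(5/2)) * (ee (-(1/2)) * ee (-(1/2))) := by
              rw [ee_sq, ee_mul, ee_mul, ee_mul]
              norm_num
        have h2' := hstep z₁ (R b₁ z) hDz1 hQz1 hstep1
        rw [← hz₂def] at h2'
        have h3' := hstep z₂ (R b₁ (R b₁ z)) hD2 hQz2 h2'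
        rw [← hz₃def] at h3'
        rw [hiter3]
        exact h3'
      by_cases hdle : ‖z₃ - c₁‖ ≤ ee (-2)
      · obtain ⟨τ, hτ⟩ := IsAlgClosed.exists_pow_nat_eq (8:K) (n := 2) (by norm_num)
        have hτn : ‖τ‖ = ee (-(3/2)) := by
          apply eq_ee_of_sq (norm_nonneg τ)
          have h8 : ‖τ‖ ^ 2 = ‖(8:K)‖ := by rw [← norm_pow, hτ]
          rw [h8, show (8:K) = 2 ^ 3 from by norm_num, norm_pow, h2]
          rw [show (2:ℝ) * (-(3/2)) = (-1) + ((-1) + (-1)) from by norm_num,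
            ee_add, ee_add, ee_neg_one]
          norm_num
        have hmem : c₁ + τ ∈ Metric.closedBall c₁ (1/(2*Real.sqrt 2)) := by
          rw [Metric.mem_closedBall, dist_eq_norm, hball]
          simp [hτn]
        rw [← hper] at hmem
        obtain ⟨z, hzB, hz3z⟩ := hmem
        have hzB' : ‖z - c₁‖ ≤ ee (-(3/2)) := by
          rw [Metric.mem_closedBall, dist_eq_norm, hball] at hzB; exact hzB
        have hb := BND z hzB'
        rw [hz3z] at hb
        have heq : ‖c₁ + τ - z₃‖ = ee (-(3/2)) := by
          rw [show c₁ + τ - z₃ = τ - (z₃ - c₁) from by ring]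
          exact iso_subv hτn hdle (ee_lt_iff.2 (by norm_num))
        rw [heq] at hb
        have := ee_lt_iff.2 (show (-(5/2):ℝ) < -(3/2) from by norm_num)
        linarith
      · push_neg at hdle
        obtain ⟨ω, r₂', hsum', hprod', hω, _⟩ := quad_roots' (1:K) (1:K)
        have hω' : ω ^ 2 + ω + 1 = 0 := by linear_combination hω
        have hωn : ‖ω‖ = 1 := by
          have hA : ‖ω‖ ^ 2 ≤ max ‖ω‖ 1 := by
            have hid : ω ^ 2 = -(ω + 1) := by linear_combination hω'
            calc ‖ω‖ ^ 2 = ‖ω ^ 2‖ := (norm_pow ω 2).symm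
              _ = ‖ω + 1‖ := by rw [hid, norm_neg]
              _ ≤ max ‖ω‖ ‖(1:K)‖ := ult' _ _
              _ = max ‖ω‖ 1 := by rw [norm_one]
          have hB : (1:ℝ) ≤ max (‖ω‖ ^ 2) ‖ω‖ := by
            have hid : (1:K) = -(ω ^ 2 + ω) := by linear_combination hω'
            calc (1:ℝ) = ‖(1:K)‖ := norm_one.symm
              _ = ‖ω ^ 2 + ω‖ := by rw [hid, norm_neg]
              _ ≤ max ‖ω ^ 2‖ ‖ω‖ := ult' _ _
              _ = max (‖ω‖ ^ 2) ‖ω‖ := by rw [norm_pow]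
          exact eq_one_of_sq_facts (norm_nonneg ω) hA hB
        have hω1 : ‖ω - 1‖ = 1 := by
          have h3n : ‖(3:K)‖ = 1 := by
            rw [show (3:K) = 1 + 2 from by norm_num,
              iso' (x := (1:K)) (y := (2:K)) (by rw [norm_one, h2]; norm_num), norm_one]
          have hsq : ‖ω - 1‖ ^ 2 = 1 := by
            have hid : (ω - 1) ^ 2 = -(3 * ω) := by linear_combination hω'
            rw [← norm_pow, hid, norm_neg, norm_mul, h3n, hωn, one_mul]
          exact eq_one_of_sq (norm_nonneg _) hsq
        have hmem : c₁ + ω * (z₃ - c₁) ∈ Metric.closedBall c₁ (1/(2*Real.sqrt 2)) := by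
          rw [Metric.mem_closedBall, dist_eq_norm, hball,
            show c₁ + ω * (z₃ - c₁) - c₁ = ω * (z₃ - c₁) from by ring,
            norm_mul, hωn, one_mul]
          exact hz3mem
        rw [← hper] at hmem
        obtain ⟨z, hzB, hz3z⟩ := hmem
        have hzB' : ‖z - c₁‖ ≤ ee (-(3/2)) := by
          rw [Metric.mem_closedBall, dist_eq_norm, hball] at hzB; exact hzB
        have hb := BND z hzB'
        rw [hz3z] at hb
        rw [show c₁ + ω * (z₃ - c₁) - z₃ = (ω - 1) * (z₃ - c₁) from by ring,
          norm_mul, hω1, one_mul] at hb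
        have := ee_lt_iff.2 (show (-(5/2):ℝ) < -2 from by norm_num)
        linarith
  -- consequences of G1
  have l321 : ee (-(3/2)) < 1 := ee_lt_one (by norm_num)
  have h1b : ‖1 + b₁‖ ≤ ee (-(3/2)) := by
    rw [show (1:K) + b₁ = (1 + z₁ * b₁) - (z₁ - 1) * b₁ from by ring]
    exact ult_sub_le honezb.le (le_of_eq (by rw [hmulb, hσ]))
  have hz2n : ‖z₂‖ = ee (-(3/2)) := by rw [hz2nσ, hσ]
  have hDz2n : ‖b₁ * z₂ - 1/a‖ = ee (-1) := by
    rw [show b₁ * z₂ - 1/a = -((1:K)/a - b₁ * z₂) from by ring, norm_neg]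
    exact iso_subv hna (by rw [hbmul]; exact hz2n.le) (ee_lt_iff.2 (by norm_num))
  have l2c : ‖(2:K) * c₁‖ = ee (-(3/2)) := by
    rw [norm_mul, h2K, hc, ee_mul]; norm_num
  -- one triple backward step through the 3-cycle
  have step3 : ∀ (y : K) (h : ℝ), 0 < h → h ≤ 1/2 → ‖y - c₁‖ = ee (h - 3/2) →
      ∃ y' : K, ‖y' - c₁‖ = ee (h/2 - 3/2) ∧ R b₁ (R b₁ (R b₁ y')) = y := by
    intro y h h0 hh hy
    have hyn : ‖y‖ = ee (-(1/2)) := by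
      have := iso_addv hc (le_of_eq hy) (ee_lt_iff.2 (by linarith))
      simpa using this
    have hy0 : y ≠ 0 := by intro h'; rw [h', norm_zero] at hyn; exact ee_ne _ hyn.symm
    -- (i) pull back through z₂
    obtain ⟨u₁, u₂, hu₁, hu₂, husum, huprod⟩ := pre ha hb₁ R hRdef y z₂ hy0
    have h1yb : ‖(1:K) + y * b₁‖ = 1 :=
      iso_addv (u := (1:ℝ)) norm_one (by rw [hmulb]; exact hyn.le) l1
    have hsn : ‖u₁ + u₂‖ = 1 := by
      rw [husum]
      exact iso_subv h1yb
        (by rw [norm_mul, h2K, hz2n, ee_mul]; exact le_of_eq (by norm_num)) l52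
    have hz3y : ‖z₃ - y‖ = ee (h - 3/2) := by
      rw [show z₃ - y = (z₃ - c₁) - (y - c₁) from by ring]
      exact iso_subv' hy hz3mem (ee_lt_iff.2 (by linarith))
    have hpn : ‖u₁ * u₂‖ = ee (h - 5/2) := by
      rw [huprod, show z₂^2 - (1 + y*b₁)*z₂ + y/a = (z₃ - y) * (b₁*z₂ - 1/a) from by
        linear_combination -hz3e]
      rw [norm_mul, hz3y, hDz2n, ee_mul]
      exact congrArg ee (by ring)
    obtain ⟨sp, tp, hstp, hspn, htpn⟩ := newton_split (u₁ := u₁) (u₂ := u₂) (by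
      rw [hsn, hpn, one_pow]; exact ee_lt_one (by linarith))
    rw [hsn, mul_one, hpn] at hspn
    have hRsp : R b₁ (z₂ + sp) = y := by
      rcases hstp with ⟨h', _⟩ | ⟨h', _⟩ <;> rw [h'] <;> assumption
    have hpnorm : ‖z₂ + sp‖ = ee (-(3/2)) :=
      iso_addv hz2n (le_of_eq hspn) (ee_lt_iff.2 (by linarith))
    have hp0 : z₂ + sp ≠ 0 := by
      intro h'; rw [h', norm_zero] at hpnorm; exact ee_ne _ hpnorm.symm
    -- (ii) pull back through z₁
    obtain ⟨v₁, v₂, hv₁, hv₂, hvsum, hvprod⟩ := pre ha hb₁ R hRdef (z₂ + sp) z₁ hp0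
    have h1pb : ‖(1:K) + (z₂ + sp) * b₁‖ = 1 :=
      iso_addv (u := (1:ℝ)) norm_one (by rw [hmulb]; exact hpnorm.le) l321
    have hvsn : ‖v₁ + v₂‖ = 1 := by
      rw [hvsum]
      exact iso_subv h1pb
        (by rw [norm_mul, h2K, hz1n, mul_one]) (ee_lt_one (by norm_num))
    have hvpn : ‖v₁ * v₂‖ = ee (h - 5/2) := by
      rw [hvprod, show z₁^2 - (1 + (z₂ + sp)*b₁)*z₁ + (z₂ + sp)/a
          = (z₂ - (z₂ + sp)) * (b₁*z₁ - 1/a) from by linear_combination -hz2]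
      rw [show z₂ - (z₂ + sp) = -sp from by ring, norm_mul, norm_neg, hspn, hDz1, mul_one]
    obtain ⟨sq', tq, hstq, hsqn, htqn⟩ := newton_split (u₁ := v₁) (u₂ := v₂) (by
      rw [hvsn, hvpn, one_pow]; exact ee_lt_one (by linarith))
    rw [hvsn, mul_one, hvpn] at hsqn
    have hRsq : R b₁ (z₁ + sq') = z₂ + sp := by
      rcases hstq with ⟨h', _⟩ | ⟨h', _⟩ <;> rw [h'] <;> assumption
    have hqnorm : ‖z₁ + sq'‖ = 1 :=
      iso_addv hz1n (le_of_eq hsqn) (ee_lt_one (by linarith))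
    have hq0 : z₁ + sq' ≠ 0 := by
      intro h'; rw [h', norm_zero] at hqnorm; norm_num at hqnorm
    -- (iii) pull back through c₁
    obtain ⟨w₁, w₂, hw₁, hw₂, hwsum, hwprod⟩ := pre ha hb₁ R hRdef (z₁ + sq') c₁ hq0
    have h1qb : ‖(1:K) + (z₁ + sq') * b₁‖ ≤ ee (-(3/2)) := by
      rw [show (1:K) + (z₁ + sq') * b₁ = (1 + z₁ * b₁) + sq' * b₁ from by ring]
      exact ult_le honezb.le (by rw [hmulb, hsqn]; exact ee_le_iff.2 (by linarith))
    have hwsn : ‖w₁ + w₂‖ ≤ ee (-(3/2)) := by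
      rw [hwsum]
      exact ult_sub_le h1qb (le_of_eq l2c)
    have hwpn : ‖w₁ * w₂‖ = ee (h - 3) := by
      rw [hwprod, show c₁^2 - (1 + (z₁ + sq')*b₁)*c₁ + (z₁ + sq')/a
          = (z₁ - (z₁ + sq')) * (b₁*c₁ - 1/a) from by linear_combination -hz1]
      rw [show z₁ - (z₁ + sq') = -sq' from by ring, norm_mul, norm_neg, hsqn, hDc, ee_mul]
      exact congrArg ee (by ring)
    have hween : ‖w₁‖ = ‖w₂‖ := newton_eq (by
      rw [hwpn]
      calc ‖w₁ + w₂‖^2 ≤ ee (-(3/2))^2 := pow_le_pow_left₀ (norm_nonneg _) hwsn 2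
        _ = ee (-3) := by rw [ee_sq]; norm_num
        _ < ee (h - 3) := ee_lt_iff.2 (by linarith))
    have hw1n : ‖w₁‖ = ee (h/2 - 3/2) := by
      apply eq_ee_of_sq (norm_nonneg _)
      rw [show (2:ℝ) * (h/2 - 3/2) = h - 3 from by ring, ← hwpn, norm_mul, hween, sq]
    exact ⟨c₁ + w₁, by simpa using hw1n, by rw [hw₁, hRsq, hRsp]⟩
  -- the Ψ tower
  have tower : ∀ j : ℕ, ∃ y : K,
      ‖y - c₁‖ = ee (1/2^(j+1) - 3/2) ∧ (R b₁)^[3*j+1] y = 1 := by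
    intro j
    induction j with
    | zero =>
      obtain ⟨u₁, u₂, hu₁, hu₂, husum, huprod⟩ := pre ha hb₁ R hRdef 1 c₁ one_ne_zero
      have hsn : ‖u₁ + u₂‖ ≤ ee (-(3/2)) := by
        rw [husum]
        refine ult_sub_le ?_ (le_of_eq l2c)
        rw [show (1:K) + 1 * b₁ = 1 + b₁ from by ring]
        exact h1b
      have hpn : ‖u₁ * u₂‖ = ee (-2) := by
        rw [huprod, show c₁^2 - (1 + 1*b₁)*c₁ + 1/a = (z₁ - 1) * (b₁*c₁ - 1/a) from by
          linear_combination -hz1]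
        rw [norm_mul, hσ, hDc, ee_mul]; norm_num
      have hune : ‖u₁‖ = ‖u₂‖ := newton_eq (by
        rw [hpn]
        calc ‖u₁ + u₂‖^2 ≤ ee (-(3/2))^2 := pow_le_pow_left₀ (norm_nonneg _) hsn 2
          _ = ee (-3) := by rw [ee_sq]; norm_num
          _ < ee (-2) := ee_lt_iff.2 (by norm_num))
      have hu1n : ‖u₁‖ = ee (1/2^(0+1) - 3/2) := by
        apply eq_ee_of_sq (norm_nonneg _)
        rw [show (2:ℝ) * (1/2^(0+1) - 3/2) = -2 from by norm_num, ← hpn, norm_mul, hune, sq]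
      exact ⟨c₁ + u₁, by simpa using hu1n, by simpa using hu₁⟩
    | succ j ih =>
      obtain ⟨y, hy, hit⟩ := ih
      have hle : (1:ℝ)/2^(j+1) ≤ 1/2 := by
        have h1 : (2:ℝ) ^ 1 ≤ 2^(j+1) := by
          apply pow_le_pow_right₀ (by norm_num) (by omega)
        have h2' : (0:ℝ) < 2^1 := by norm_num
        calc (1:ℝ)/2^(j+1) ≤ 1/2^1 := one_div_le_one_div_of_le h2' h1
          _ = 1/2 := by norm_num
      obtain ⟨y', hy', hR3⟩ := step3 y (1/2^(j+1)) (by positivity) hle hy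
      refine ⟨y', ?_, ?_⟩
      · rw [hy']
        exact congrArg ee (by rw [pow_succ]; ring)
      · rw [show 3*(j+1)+1 = (3*j+1) + 3 from by ring, Function.iterate_add_apply]
        rw [show (R b₁)^[3] y' = y from by rw [hiter3]; exact hR3]
        exact hit
  obtain ⟨Y, hY, hYit⟩ := tower (m₁ - 1)
  have hm' : m₁ - 1 + 1 = m₁ := Nat.succ_pred_eq_of_pos hm₁
  rw [hm'] at hY
  have hmle : (1:ℝ)/2^m₁ ≤ 1/2 := by
    have h1 : (2:ℝ) ^ 1 ≤ 2^m₁ := by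
      apply pow_le_pow_right₀ (by norm_num) (by omega)
    have h2' : (0:ℝ) < 2^1 := by norm_num
    calc (1:ℝ)/2^m₁ ≤ 1/2^1 := one_div_le_one_div_of_le h2' h1
      _ = 1/2 := by norm_num
  have hYn : ‖Y‖ = ee (-(1/2)) := by
    have := iso_addv hc (le_of_eq hY) (ee_lt_iff.2 (by linarith))
    simpa using this
  have hY0 : Y ≠ 0 := by intro h'; rw [h', norm_zero] at hYn; exact ee_ne _ hYn.symm
  -- the Γ tower
  have gtow : ∀ k : ℕ, ∃ g : K, ‖g‖ = ee (-(k:ℝ) - 1/2) ∧ (R b₁)^[k] g = Y := by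
    intro k
    induction k with
    | zero =>
      exact ⟨Y, by rw [hYn]; exact congrArg ee (by norm_num), rfl⟩
    | succ k ih =>
      obtain ⟨g, hgn, hgit⟩ := ih
      have hg0 : g ≠ 0 := by intro h'; rw [h', norm_zero] at hgn; exact ee_ne _ hgn.symm
      have hkn : (0:ℝ) ≤ (k:ℝ) := Nat.cast_nonneg k
      obtain ⟨u₁, u₂, hu₁, hu₂, husum, huprod⟩ := pre ha hb₁ R hRdef g 0 hg0
      have hsn : ‖u₁ + u₂‖ = 1 := by
        rw [husum, show (1:K) + g*b₁ - 2*0 = 1 + g*b₁ from by ring]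
        exact iso_addv (u := (1:ℝ)) norm_one (by rw [hmulb]; exact hgn.le)
          (ee_lt_one (by linarith))
      have hpn : ‖u₁ * u₂‖ = ee (-(k:ℝ) - 3/2) := by
        rw [huprod, show (0:K)^2 - (1 + g*b₁)*0 + g/a = g/a from by ring,
          norm_div, hgn, ha,
          show (-(k:ℝ) - 3/2) = (-(k:ℝ) - 1/2) + (-1) from by ring, ee_add, ee_neg_one]
        ring
      obtain ⟨sp, tp, hstp, hspn, htpn⟩ := newton_split (u₁ := u₁) (u₂ := u₂) (by
        rw [hsn, hpn, one_pow]; exact ee_lt_one (by linarith))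
      rw [hsn, mul_one, hpn] at hspn
      have hRsp : R b₁ (0 + sp) = g := by
        rcases hstp with ⟨h', _⟩ | ⟨h', _⟩ <;> rw [h'] <;> assumption
      refine ⟨sp, ?_, ?_⟩
      · rw [hspn]; exact congrArg ee (by push_cast; ring)
      · rw [Function.iterate_succ_apply, show R b₁ sp = g from by simpa using hRsp, hgit]
  obtain ⟨t, htn, htit⟩ := gtow n₁
  have ht0 : t ≠ 0 := by intro h'; rw [h', norm_zero] at htn; exact ee_ne _ htn.symm
  have hnn : (0:ℝ) ≤ (n₁:ℝ) := Nat.cast_nonneg n₁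
  have hn1 : (1:ℝ) ≤ (n₁:ℝ) := by exact_mod_cast hn₁.le
  -- the last pullback, taking the root near 1
  obtain ⟨u₁, u₂, hu₁, hu₂, husum, huprod⟩ := pre ha hb₁ R hRdef t 0 ht0
  have hsn : ‖u₁ + u₂‖ = 1 := by
    rw [husum, show (1:K) + t*b₁ - 2*0 = 1 + t*b₁ from by ring]
    exact iso_addv (u := (1:ℝ)) norm_one (by rw [hmulb]; exact htn.le)
      (ee_lt_one (by linarith))
  have hpn : ‖u₁ * u₂‖ = ee (-(n₁:ℝ) - 3/2) := by
    rw [huprod, show (0:K)^2 - (1 + t*b₁)*0 + t/a = t/a from by ring,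
      norm_div, htn, ha,
      show (-(n₁:ℝ) - 3/2) = (-(n₁:ℝ) - 1/2) + (-1) from by ring, ee_add, ee_neg_one]
    ring
  obtain ⟨sp, tp, hstp, hspn, htpn⟩ := newton_split (u₁ := u₁) (u₂ := u₂) (by
    rw [hsn, hpn, one_pow]; exact ee_lt_one (by linarith))
  rw [hsn, mul_one, hpn] at hspn
  rw [hsn] at htpn
  have hRtp : R b₁ (0 + tp) = t := by
    rcases hstp with ⟨_, h'⟩ | ⟨_, h'⟩ <;> rw [h'] <;> assumption
  have hRtp' : R b₁ tp = t := by simpa using hRtp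
  have hid : tp - 1 = t * b₁ - sp := by
    rcases hstp with ⟨h1', h2'⟩ | ⟨h1', h2'⟩ <;> rw [h1', h2'] at * <;>
      linear_combination husum
  have hx1 : ‖tp - 1‖ ≤ ee (-(n₁:ℝ) - 1/2) := by
    rw [hid]
    refine ult_sub_le (le_of_eq (by rw [hmulb, htn])) ?_
    exact hspn.le.trans (ee_le_iff.2 (by linarith))
  refine ⟨tp, ?_, ?_, ?_, ?_⟩
  · rw [← ee_neg_half]
    exact lt_of_le_of_lt hx1 (ee_lt_iff.2 (by linarith))
  · rw [hRtp', htn]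
    rw [show (-(n₁:ℝ) - 1/2) = (-(n₁:ℝ)) + (-(1/2)) from by ring, ee_add, ee_neg_half]
    rw [show ee (-(n₁:ℝ)) = ((2:ℝ)^(n₁:ℕ))⁻¹ from by
      rw [ee, ← Real.rpow_natCast 2 n₁, ← Real.rpow_neg (by norm_num)]]
    ring
  · rw [Function.iterate_succ_apply, hRtp', htit, hY]
    simp [rhoSeq, ee]
  · rw [show n₁ + 3*(m₁-1) + 2 = (3*(m₁-1)+1) + (n₁+1) from by omega,
      Function.iterate_add_apply,
      show (R b₁)^[n₁+1] tp = Y from by rw [Function.iterate_succ_apply, hRtp', htit]]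
    exact hYit
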